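/- Let K be a field of characteristic zero, let t₀ ≠ t₁ be elements of K, let m ≥ 1 be an integer, and let P ∈ K[X] satisfy (X − t₀)(X − t₁)·P′ = m·(X − (t₀+t₁)/2)·P, where P′ is the formal derivative. If m is even then P = c·((X − t₀)(X − t₁))^{m/2} for some c ∈ K, and if m is odd then P = 0. In particular, the kernel in K[X] of the operator P ↦ (X − t₀)(X − t₁)·P′ − m·(X − (t₀+t₁)/2)·P is spanned by ((X − t₀)(X − t₁))^{m/2} when m is even and is trivial when m is odd. -/
import Mathlib
open Polynomial

private lemma root_aux {K : Type*} [Field K] [CharZero K] (t₀ t₁ : K) (hne : t₀ ≠ t₁)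
    (m : ℕ) (hm : 1 ≤ m) (P : Polynomial K)
    (hP : (X - C t₀) * (X - C t₁) * derivative P =
      C (m : K) * ((X - C ((t₀ + t₁) / 2)) * P)) :
    P.eval t₀ = 0 := by
  have h := congrArg (eval t₀) hP
  simp only [eval_mul, eval_sub, eval_X, eval_C, sub_self, zero_mul, mul_zero] at h
  have hm0 : (m : K) ≠ 0 := Nat.cast_ne_zero.2 (by omega)
  have ht : t₀ - (t₀ + t₁) / 2 ≠ 0 := by
    intro h'; apply hne; field_simp at h'; linear_combination h'
  rcases mul_eq_zero.1 h.symm with h' | h'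
  · exact absurd h' hm0
  rcases mul_eq_zero.1 h' with h'' | h''
  · exact absurd h'' ht
  · exact h''

private lemma dvd_aux {K : Type*} [Field K] [CharZero K] (t₀ t₁ : K) (hne : t₀ ≠ t₁)
    (m : ℕ) (hm : 1 ≤ m) (P : Polynomial K)
    (hP : (X - C t₀) * (X - C t₁) * derivative P =
      C (m : K) * ((X - C ((t₀ + t₁) / 2)) * P)) :
    (X - C t₀) * (X - C t₁) ∣ P := by
  have h₀ : P.eval t₀ = 0 := root_aux t₀ t₁ hne m hm P hP
  have h₁ : P.eval t₁ = 0 := by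
    refine root_aux t₁ t₀ hne.symm m hm P ?_
    rw [show ((t₁ + t₀) / 2) = ((t₀ + t₁) / 2) by ring]
    linear_combination hP
  have hcop : IsCoprime (X - C t₀) (X - C t₁ : Polynomial K) :=
    isCoprime_X_sub_C_of_isUnit_sub (IsUnit.mk0 _ (sub_ne_zero.2 hne))
  exact hcop.mul_dvd (dvd_iff_isRoot.2 h₀) (dvd_iff_isRoot.2 h₁)

private lemma main_aux {K : Type*} [Field K] [CharZero K] (t₀ t₁ : K) (hne : t₀ ≠ t₁) :
    ∀ (m : ℕ) (P : Polynomial K),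
    ((X - C t₀) * (X - C t₁) * derivative P =
      C (m : K) * ((X - C ((t₀ + t₁) / 2)) * P)) →
    (Even m → ∃ c : K, P = C c * ((X - C t₀) * (X - C t₁)) ^ (m / 2)) ∧
    (Odd m → P = 0) := by
  have hD0 : (X - C t₀) * (X - C t₁) ≠ (0 : Polynomial K) :=
    mul_ne_zero (X_sub_C_ne_zero t₀) (X_sub_C_ne_zero t₁)
  intro m
  induction m using Nat.strong_induction_on with
  | _ m ih =>
    match m with
    | 0 =>
      intro P hP
      simp only [Nat.cast_zero, map_zero, zero_mul] at hP
      have hP' : derivative P = 0 := by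
        rcases mul_eq_zero.1 hP with h | h
        · exact absurd h hD0
        · exact h
      constructor
      · intro _
        exact ⟨P.coeff 0, by simpa using eq_C_of_derivative_eq_zero hP'⟩
      · intro h; exact absurd h (by decide)
    | 1 =>
      intro P hP
      refine ⟨fun h => absurd h (by decide), fun _ => ?_⟩
      by_contra hP0
      obtain ⟨R, hR⟩ := dvd_aux t₀ t₁ hne 1 le_rfl P hP
      have hdeg2 : 2 ≤ P.natDegree := by
        have h := natDegree_le_of_dvd ⟨R, hR⟩ hP0
        rwa [natDegree_mul (X_sub_C_ne_zero t₀) (X_sub_C_ne_zero t₁),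
          natDegree_X_sub_C, natDegree_X_sub_C] at h
      obtain ⟨k, hk⟩ : ∃ k, P.natDegree = k + 2 := ⟨P.natDegree - 2, by omega⟩
      -- compare coefficients at degree k+3
      have hco := congrArg (fun q => Polynomial.coeff q (k + 3)) hP
      have hzero1 : P.coeff (k + 3) = 0 := coeff_eq_zero_of_natDegree_lt (by omega)
      have hzero2 : P.coeff (k + 4) = 0 := coeff_eq_zero_of_natDegree_lt (by omega)
      have hexpL : (X - C t₀) * (X - C t₁) * derivative P =
          X * (X * derivative P) - (C t₀ + C t₁) * (X * derivative P)
            + C t₀ * (C t₁ * derivative P) := by ring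
      have hexpR : C ((1:ℕ) : K) * ((X - C ((t₀ + t₁) / 2)) * P) =
          X * P - C ((t₀ + t₁) / 2) * P := by
        simp only [Nat.cast_one, map_one, one_mul]; ring
      rw [hexpL, hexpR] at hco
      simp only [coeff_add, coeff_sub, coeff_X_mul, coeff_C_mul, coeff_add, add_mul,
        coeff_derivative, hzero1, hzero2, zero_mul, mul_zero, add_zero, sub_zero] at hco
      -- hco should now say : P.coeff (k+2) * (k+2) = P.coeff (k+2)
      have hlc : P.coeff (k + 2) ≠ 0 := by
        rw [← hk]; exact mt leadingCoeff_eq_zero.1 hP0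
      have heq : ((k:K) + 2) * P.coeff (k + 2) = 1 * P.coeff (k + 2) := by
        push_cast at hco; linear_combination hco
      have : ((k:K) + 2) = 1 := mul_right_cancel₀ hlc heq
      have : (k + 2 : ℕ) = 1 := by exact_mod_cast this
      omega
    | (n + 2) =>
      intro P hP
      obtain ⟨R, hPR⟩ := dvd_aux t₀ t₁ hne (n + 2) (by omega) P hP
      have h2 : C ((t₀ + t₁) / 2) * C 2 = C t₀ + C t₁ := by
        rw [← C_mul, ← C_add]; norm_num
      have hcast : ((n + 2 : ℕ) : K) = (n : K) + 2 := by push_cast; ring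
      rw [hPR, hcast, map_add] at hP
      rw [derivative_mul] at hP
      have hDder : derivative ((X - C t₀) * (X - C t₁)) =
          (X - C t₁) + (X - C t₀) := by
        simp [derivative_mul]
      rw [hDder] at hP
      have hC2 : (C (2:K) : Polynomial K) = 2 := map_ofNat C 2
      rw [hC2] at hP h2
      have hRE : (X - C t₀) * (X - C t₁) * derivative R =
          C (n : K) * ((X - C ((t₀ + t₁) / 2)) * R) := by
        apply mul_left_cancel₀ hD0
        linear_combination hP - ((X - C t₀) * (X - C t₁) * R) * h2
      obtain ⟨heven, hodd⟩ := ih n (by omega) R hRE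
      constructor
      · intro he
        have he' : Even n := by
          rcases he with ⟨j, hj⟩; exact ⟨j - 1, by omega⟩
        obtain ⟨c, hc⟩ := heven he'
        refine ⟨c, ?_⟩
        rw [hPR, hc, show (n + 2) / 2 = n / 2 + 1 by omega, pow_succ]
        ring
      · intro ho
        have ho' : Odd n := by
          rcases ho with ⟨j, hj⟩; exact ⟨j - 1, by omega⟩
        rw [hPR, hodd ho', mul_zero]

/-- Kernel of the operator `P ↦ (X−t₀)(X−t₁)P′ − m(X−(t₀+t₁)/2)P` on `K[X]` (char 0,
`t₀ ≠ t₁`): if `m` is even every solution of `(X−t₀)(X−t₁)P′ = m(X−(t₀+t₁)/2)P` is a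
scalar multiple of `((X−t₀)(X−t₁))^{m/2}`, and if `m` is odd the only solution is `0`. -/
theorem stmt14 {K : Type*} [Field K] [CharZero K] (t₀ t₁ : K) (hne : t₀ ≠ t₁)
    (m : ℕ) (hm : 1 ≤ m) (P : Polynomial K)
    (hP : (X - C t₀) * (X - C t₁) * derivative P =
      C (m : K) * ((X - C ((t₀ + t₁) / 2)) * P)) :
    (Even m → ∃ c : K, P = C c * ((X - C t₀) * (X - C t₁)) ^ (m / 2)) ∧
    (Odd m → P = 0) :=
  main_aux t₀ t₁ hne m P hP
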